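/- Let E be a complex inner product space, K ⊆ E any subset, g : E → ℝ any function, γ > 0 a real number, and r_o ∈ E. Define f(r, x) = 2·Re⟨r, x⟩ + g(x), and set r_n = r_o + γ·x_o. Suppose x_o ∈ K maximizes f(r_o, ·) over K, and x_n ∈ K maximizes f(r_n, ·) over K. Then Re⟨r_n − r_o, x_n − x_o⟩ ≥ 0, equivalently Re⟨x_o, x_n − x_o⟩ ≥ 0, and consequently ‖x_n‖² ≥ ‖x_o‖² + ‖x_n − x_o‖² ≥ ‖x_o‖²: the scrape update never decreases the norm of the maximizer. -/

import Mathlib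

open scoped InnerProductSpace

/-- the scrape update never decreases the norm of the maximizer.
In a complex inner product space, with `f(r, x) = 2·Re⟪r, x⟫ + g(x)` and
`r_n = r_o + γ·x_o` (`γ > 0`), if `x_o` maximizes `f(r_o, ·)` over `K` and `x_n`
maximizes `f(r_n, ·)` over `K`, then `Re⟪r_n − r_o, x_n − x_o⟫ ≥ 0`, equivalently
`Re⟪x_o, x_n − x_o⟫ ≥ 0`, and `‖x_n‖² ≥ ‖x_o‖² + ‖x_n − x_o‖² ≥ ‖x_o‖²`. -/
theorem scrape_update_nondecreasing_norm
    {E : Type*} [NormedAddCommGroup E] [InnerProductSpace ℂ E]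
    (K : Set E) (g : E → ℝ) (γ : ℝ) (hγ : 0 < γ) (ro : E)
    (f : E → E → ℝ)
    (hf : ∀ r x, f r x = 2 * (⟪r, x⟫_ℂ).re + g x)
    (xo : E) (hxoK : xo ∈ K) (hxomax : ∀ x ∈ K, f ro x ≤ f ro xo)
    (rn : E) (hrn : rn = ro + γ • xo)
    (xn : E) (hxnK : xn ∈ K) (hxnmax : ∀ x ∈ K, f rn x ≤ f rn xn) :
    0 ≤ (⟪rn - ro, xn - xo⟫_ℂ).re ∧
    0 ≤ (⟪xo, xn - xo⟫_ℂ).re ∧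
    ‖xo‖ ^ 2 + ‖xn - xo‖ ^ 2 ≤ ‖xn‖ ^ 2 ∧
    ‖xo‖ ^ 2 ≤ ‖xn‖ ^ 2 := by
  have h1 := hxomax xn hxnK
  have h2 := hxnmax xo hxoK
  rw [hf, hf] at h1 h2
  have key : 0 ≤ (⟪rn - ro, xn - xo⟫_ℂ).re := by
    simp only [inner_sub_left, inner_sub_right, Complex.sub_re]
    linarith
  have hdiff : rn - ro = γ • xo := by rw [hrn]; abel
  have key2 : 0 ≤ (⟪xo, xn - xo⟫_ℂ).re := by
    rw [hdiff] at key
    have hs : (γ • xo : E) = (γ : ℂ) • xo := by simp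
    rw [hs, inner_smul_left] at key
    simp only [Complex.mul_re, Complex.conj_re, Complex.conj_im, Complex.ofReal_re,
      Complex.ofReal_im, zero_mul, neg_zero, sub_zero] at key
    nlinarith
  have hnorm : ‖xn‖ ^ 2 = ‖xo‖ ^ 2 + 2 * (⟪xo, xn - xo⟫_ℂ).re + ‖xn - xo‖ ^ 2 := by
    have := @norm_add_sq ℂ E _ _ _ xo (xn - xo)
    rw [add_sub_cancel] at this
    exact this
  refine ⟨key, key2, by nlinarith, by nlinarith [sq_nonneg ‖xn - xo‖]⟩
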